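/- Let n ≥ 2 and γ ∈ [0, 1/√n). The Hilbert diameter of the cone K(γ) equals ln(1 − n + n/(1 − √n·γ)²); that is, sup{d(x,y) : x, y ∈ K(γ), x ≠ 0, y ≠ 0} = ln(1 − n + n/(1 − √n·γ)²). -/

import Mathlib

/-- The Euclidean norm on `ℝⁿ` (coordinates model). -/
noncomputable def eunorm {n : ℕ} (x : Fin n → ℝ) : ℝ := Real.sqrt (∑ i, (x i) ^ 2)

/-- The Hilbert (projective) metric between two vectors with strictly positive
coordinates: `d(x,y) = log((max_i x_i/y_i)/(min_i x_i/y_i))`. -/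
noncomputable def hilbertDist {n : ℕ} (x y : Fin n → ℝ) : ℝ :=
  Real.log ((⨆ i, x i / y i) / (⨅ i, x i / y i))

/-- The cone `K(γ) = {x ∈ ℝⁿ : x_i ≥ (1/√n − γ)·|x| for every i}`. -/
noncomputable def Kcone (n : ℕ) (γ : ℝ) : Set (Fin n → ℝ) :=
  {x | ∀ i, (1 / Real.sqrt n - γ) * eunorm x ≤ x i}

lemma eunorm_nonneg {n : ℕ} (x : Fin n → ℝ) : 0 ≤ eunorm x := Real.sqrt_nonneg _

lemma eunorm_sq {n : ℕ} (x : Fin n → ℝ) : eunorm x ^ 2 = ∑ i, x i ^ 2 :=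
  Real.sq_sqrt (by positivity)

lemma eunorm_pos {n : ℕ} {x : Fin n → ℝ} (hx : x ≠ 0) : 0 < eunorm x := by
  apply Real.sqrt_pos.mpr
  obtain ⟨i, hi⟩ := Function.ne_iff.mp hx
  exact Finset.sum_pos' (fun j _ => sq_nonneg _)
    ⟨i, Finset.mem_univ i, pow_two_pos_of_ne_zero hi⟩

lemma coord_le {n : ℕ} (hn : 1 ≤ n) {c : ℝ} (hc : 0 ≤ c)
    (h1 : 0 ≤ 1 - ((n : ℝ) - 1) * c ^ 2) {x : Fin n → ℝ}
    (hx : ∀ i, c * eunorm x ≤ x i) (i : Fin n) :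
    x i ≤ Real.sqrt (1 - ((n : ℝ) - 1) * c ^ 2) * eunorm x := by
  have hN0 : 0 ≤ eunorm x := eunorm_nonneg x
  have hxi0 : 0 ≤ x i := le_trans (by positivity) (hx i)
  have hsum : ∑ j, x j ^ 2 = eunorm x ^ 2 := (eunorm_sq x).symm
  have hsplit : x i ^ 2 + ∑ j ∈ Finset.univ.erase i, x j ^ 2 = ∑ j, x j ^ 2 :=
    Finset.add_sum_erase Finset.univ (fun j => x j ^ 2) (Finset.mem_univ i)
  have hlow : ((n : ℝ) - 1) * (c * eunorm x) ^ 2 ≤ ∑ j ∈ Finset.univ.erase i, x j ^ 2 := by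
    have hkey := Finset.card_nsmul_le_sum (Finset.univ.erase i) (fun j => x j ^ 2)
      ((c * eunorm x) ^ 2)
      (fun j _ => pow_le_pow_left₀ (by positivity) (hx j) 2)
    rw [Finset.card_erase_of_mem (Finset.mem_univ i), Finset.card_univ, Fintype.card_fin,
      nsmul_eq_mul, Nat.cast_sub hn, Nat.cast_one] at hkey
    exact hkey
  have hsq : x i ^ 2 ≤ (1 - ((n : ℝ) - 1) * c ^ 2) * eunorm x ^ 2 := by nlinarith
  calc x i = Real.sqrt (x i ^ 2) := (Real.sqrt_sq hxi0).symm
    _ ≤ Real.sqrt ((1 - ((n : ℝ) - 1) * c ^ 2) * eunorm x ^ 2) := Real.sqrt_le_sqrt hsq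
    _ = Real.sqrt (1 - ((n : ℝ) - 1) * c ^ 2) * eunorm x := by
        rw [Real.sqrt_mul h1, Real.sqrt_sq hN0]

/-- the Hilbert diameter of `K(γ)` equals `log(1 − n + n/(1 − √n·γ)²)`. -/
theorem stmt4 {n : ℕ} (hn : 2 ≤ n) (γ : ℝ) (hγ0 : 0 ≤ γ) (hγ : γ < 1 / Real.sqrt n) :
    sSup {d : ℝ | ∃ x ∈ Kcone n γ, ∃ y ∈ Kcone n γ, x ≠ 0 ∧ y ≠ 0 ∧ d = hilbertDist x y} =
      Real.log (1 - (n : ℝ) + (n : ℝ) / (1 - Real.sqrt n * γ) ^ 2) := by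
  have hn0 : (0:ℝ) < n := by positivity
  have hs : (0:ℝ) < Real.sqrt n := Real.sqrt_pos.mpr hn0
  set s := Real.sqrt n with hs_def
  have hsq : s ^ 2 = n := Real.sq_sqrt (Nat.cast_nonneg n)
  set c := 1 / s - γ with hc_def
  have hc : 0 < c := sub_pos.mpr hγ
  have hc1 : c ≤ 1 / s := by simp [hc_def]; linarith
  have hnc : (n : ℝ) * c ^ 2 ≤ 1 := by
    have h2 : c ^ 2 ≤ (1 / s) ^ 2 := pow_le_pow_left₀ hc.le hc1 2
    have h3 : (n : ℝ) * c ^ 2 ≤ n * (1 / s) ^ 2 := by nlinarith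
    calc (n:ℝ) * c ^ 2 ≤ n * (1 / s) ^ 2 := h3
      _ = n / s ^ 2 := by ring
      _ = 1 := by rw [hsq]; field_simp
  have hM2pos : 0 < 1 - ((n : ℝ) - 1) * c ^ 2 := by nlinarith
  set M := Real.sqrt (1 - ((n : ℝ) - 1) * c ^ 2) with hM_def
  have hM2 : M ^ 2 = 1 - ((n : ℝ) - 1) * c ^ 2 := Real.sq_sqrt hM2pos.le
  have hM : 0 < M := Real.sqrt_pos.mpr hM2pos
  have hcM : c ≤ M := by
    have h4 : c ^ 2 ≤ M ^ 2 := by rw [hM2]; nlinarith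
    calc c = Real.sqrt (c ^ 2) := (Real.sqrt_sq hc.le).symm
      _ ≤ Real.sqrt (M ^ 2) := Real.sqrt_le_sqrt h4
      _ = M := Real.sqrt_sq hM.le
  have h1sγ : 1 - s * γ = s * c := by rw [hc_def, mul_sub, mul_one_div_cancel hs.ne']
  have htarget : 1 - (n : ℝ) + (n : ℝ) / (1 - s * γ) ^ 2 = M ^ 2 / c ^ 2 := by
    rw [h1sγ, mul_pow, hsq, hM2]
    field_simp
    ring
  have hni : Nonempty (Fin n) := ⟨⟨0, by omega⟩⟩
  -- membership in Kcone via coord_le: hypotheses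
  have hmemK : ∀ x : Fin n → ℝ, x ∈ Kcone n γ → ∀ i, c * eunorm x ≤ x i := by
    intro x hx i; exact hx i
  -- upper bound for elements of the set
  have hub : ∀ d ∈ {d : ℝ | ∃ x ∈ Kcone n γ, ∃ y ∈ Kcone n γ, x ≠ 0 ∧ y ≠ 0 ∧ d = hilbertDist x y},
      d ≤ Real.log (M ^ 2 / c ^ 2) := by
    rintro d ⟨x, hx, y, hy, hx0, hy0, rfl⟩
    have hNx : 0 < eunorm x := eunorm_pos hx0
    have hNy : 0 < eunorm y := eunorm_pos hy0
    have hxu : ∀ i, x i ≤ M * eunorm x := fun i => coord_le (by omega) hc.le hM2pos.le (hmemK x hx) i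
    have hyu : ∀ i, y i ≤ M * eunorm y := fun i => coord_le (by omega) hc.le hM2pos.le (hmemK y hy) i
    have hxl : ∀ i, c * eunorm x ≤ x i := hmemK x hx
    have hyl : ∀ i, c * eunorm y ≤ y i := hmemK y hy
    have hsup_le : (⨆ i, x i / y i) ≤ (M * eunorm x) / (c * eunorm y) :=
      ciSup_le fun i => div_le_div₀ (by positivity) (hxu i) (by positivity) (hyl i)
    have hinf_ge : (c * eunorm x) / (M * eunorm y) ≤ ⨅ i, x i / y i :=
      le_ciInf fun i => div_le_div₀ (le_trans (by positivity) (hxl i)) (hxl i)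
        (lt_of_lt_of_le (by positivity) (hyl i)) (hyu i)
    have hinfpos : 0 < ⨅ i, x i / y i := lt_of_lt_of_le (by positivity) hinf_ge
    have hsuppos : 0 < ⨆ i, x i / y i := by
      obtain ⟨i⟩ := hni
      have h5 : x i / y i ≤ ⨆ i, x i / y i :=
        le_ciSup (f := fun i => x i / y i) (Set.Finite.bddAbove (Set.finite_range _)) i
      have h6 : 0 < x i / y i := div_pos (lt_of_lt_of_le (by positivity) (hxl i))
        (lt_of_lt_of_le (by positivity) (hyl i))
      linarith
    have hratio : (⨆ i, x i / y i) / (⨅ i, x i / y i) ≤ M ^ 2 / c ^ 2 := by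
      calc (⨆ i, x i / y i) / (⨅ i, x i / y i)
          ≤ ((M * eunorm x) / (c * eunorm y)) / ((c * eunorm x) / (M * eunorm y)) :=
            div_le_div₀ (by positivity) hsup_le (by positivity) hinf_ge
        _ = M ^ 2 / c ^ 2 := by field_simp
    unfold hilbertDist
    exact Real.log_le_log (by positivity) hratio
  -- extremal pair of spike vectors
  have hi0lt : 0 < n := by omega
  have hi1lt : 1 < n := by omega
  set i0 : Fin n := ⟨0, hi0lt⟩ with hi0_def
  set i1 : Fin n := ⟨1, hi1lt⟩ with hi1_def
  have hne01 : i0 ≠ i1 := by simp [hi0_def, hi1_def, Fin.ext_iff]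
  set xv : Fin n → ℝ := fun i => if i = i0 then M else c with hxv_def
  set yv : Fin n → ℝ := fun i => if i = i1 then M else c with hyv_def
  have hsumv : ∀ j : Fin n, (∑ i, (if i = j then M else c) ^ 2) = 1 := by
    intro j
    have e1 : (∑ i, (if i = j then M else c) ^ 2)
        = (if j = j then M else c) ^ 2 + ∑ i ∈ Finset.univ.erase j, (if i = j then M else c) ^ 2 :=
      (Finset.add_sum_erase Finset.univ (fun i => (if i = j then M else c) ^ 2)
        (Finset.mem_univ j)).symm
    rw [e1, if_pos rfl,
      Finset.sum_congr rfl (fun i hi => by rw [if_neg (Finset.ne_of_mem_erase hi)]),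
      Finset.sum_const, Finset.card_erase_of_mem (Finset.mem_univ j), Finset.card_univ,
      Fintype.card_fin, nsmul_eq_mul, Nat.cast_sub (by omega : 1 ≤ n), Nat.cast_one, hM2]
    ring
  have hnormv : ∀ j : Fin n, eunorm (fun i => if i = j then M else c) = 1 := by
    intro j; unfold eunorm; rw [hsumv j, Real.sqrt_one]
  have hceq : 1 / Real.sqrt n - γ = c := by rw [hc_def, hs_def]
  have hKv : ∀ j : Fin n, (fun i => if i = j then M else c) ∈ Kcone n γ := by
    intro j i
    show (1 / Real.sqrt n - γ) * eunorm (fun i => if i = j then M else c) ≤ _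
    rw [hnormv j, mul_one, hceq]
    show c ≤ if i = j then M else c
    by_cases h : i = j
    · rw [if_pos h]; exact hcM
    · rw [if_neg h]
  have hxvK : xv ∈ Kcone n γ := hKv i0
  have hyvK : yv ∈ Kcone n γ := hKv i1
  have hxvi0 : xv i0 = M := if_pos rfl
  have hyvi0 : yv i0 = c := if_neg hne01
  have hxvi1 : xv i1 = c := if_neg (Ne.symm hne01)
  have hyvi1 : yv i1 = M := if_pos rfl
  have hxv0 : xv ≠ 0 := by
    intro h
    have h0 : xv i0 = 0 := by rw [h]; rfl
    rw [hxvi0] at h0; exact hM.ne' h0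
  have hyv0 : yv ≠ 0 := by
    intro h
    have h0 : yv i1 = 0 := by rw [h]; rfl
    rw [hyvi1] at h0; exact hM.ne' h0
  have hxv_le : ∀ i, xv i ≤ M := by
    intro i; simp only [hxv_def]; split
    · exact le_refl M
    · exact hcM
  have hyv_le : ∀ i, yv i ≤ M := by
    intro i; simp only [hyv_def]; split
    · exact le_refl M
    · exact hcM
  have hxv_ge : ∀ i, c ≤ xv i := by
    intro i; simp only [hxv_def]; split
    · exact hcM
    · exact le_refl c
  have hyv_ge : ∀ i, c ≤ yv i := by
    intro i; simp only [hyv_def]; split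
    · exact hcM
    · exact le_refl c
  have hsupv : (⨆ i, xv i / yv i) = M / c := by
    apply le_antisymm
    · exact ciSup_le fun i => div_le_div₀ hM.le (hxv_le i) hc (hyv_ge i)
    · have h5 := le_ciSup (f := fun i => xv i / yv i)
        (Set.Finite.bddAbove (Set.finite_range _)) i0
      rwa [hxvi0, hyvi0] at h5
  have hinfv : (⨅ i, xv i / yv i) = c / M := by
    apply le_antisymm
    · have h5 := ciInf_le (f := fun i => xv i / yv i)
        (Set.Finite.bddBelow (Set.finite_range _)) i1
      rwa [hxvi1, hyvi1] at h5
    · exact le_ciInf fun i =>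
        div_le_div₀ (le_trans hc.le (hxv_ge i)) (hxv_ge i)
          (lt_of_lt_of_le hc (hyv_ge i)) (hyv_le i)
  have hdist : hilbertDist xv yv = Real.log (M ^ 2 / c ^ 2) := by
    unfold hilbertDist
    rw [hsupv, hinfv]
    congr 1
    field_simp
  rw [htarget]
  apply le_antisymm
  · exact csSup_le ⟨hilbertDist xv yv, ⟨xv, hxvK, yv, hyvK, hxv0, hyv0, rfl⟩⟩ hub
  · exact le_csSup ⟨Real.log (M ^ 2 / c ^ 2), hub⟩
      ⟨xv, hxvK, yv, hyvK, hxv0, hyv0, hdist.symm⟩
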